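/- Let L = ⊕_{σ∈G} L_σ be a graded semiprime G-graded Lie algebra and let I be a graded essential ideal of L. Then the ideal I² = [I,I] is also a graded essential ideal of L. -/

import Mathlib

private lemma sum_lie' {L : Type*} [LieRing L]
    {α : Type*} (s : Finset α) (f : α → L) (y : L) :
    ⁅∑ a ∈ s, f a, y⁆ = ∑ a ∈ s, ⁅f a, y⁆ := by
  induction s using Finset.cons_induction with
  | empty => simp
  | cons a s ha ih => simp [add_lie, ih]

private lemma lie_sum' {L : Type*} [LieRing L]
    {α : Type*} (s : Finset α) (f : α → L) (y : L) :
    ⁅y, ∑ a ∈ s, f a⁆ = ∑ a ∈ s, ⁅y, f a⁆ := by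
  induction s using Finset.cons_induction with
  | empty => simp
  | cons a s ha ih => simp [lie_add, ih]

/-- Let `L = ⊕_{σ∈G} L_σ` be a graded semiprime `G`-graded Lie
algebra and let `I` be a graded essential ideal of `L`.  Then the ideal
`I² = ⁅I, I⁆` is also a graded essential ideal of `L`. -/
theorem bracket_of_graded_essential_is_graded_essential
    {Φ : Type*} [CommRing Φ] {G : Type*} [CommGroup G] [DecidableEq G]
    {L : Type*} [LieRing L] [LieAlgebra Φ L]
    (𝒜 : G → Submodule Φ L) [DirectSum.Decomposition 𝒜]
    (hbracket : ∀ (σ τ : G) (x y : L), x ∈ 𝒜 σ → y ∈ 𝒜 τ → ⁅x, y⁆ ∈ 𝒜 (σ * τ))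
    (hsemiprime : ∀ J : LieIdeal Φ L,
      (∀ y ∈ J, ∀ σ : G, (DirectSum.decompose 𝒜 y σ : L) ∈ J) →
      J ≠ ⊥ → ⁅J, J⁆ ≠ (⊥ : LieIdeal Φ L))
    (I : LieIdeal Φ L)
    (hIgr : ∀ y ∈ I, ∀ σ : G, (DirectSum.decompose 𝒜 y σ : L) ∈ I)
    (hIess : ∀ K : LieIdeal Φ L,
      (∀ y ∈ K, ∀ σ : G, (DirectSum.decompose 𝒜 y σ : L) ∈ K) →
      K ≠ ⊥ → I ⊓ K ≠ ⊥) :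
    (∀ y ∈ (⁅I, I⁆ : LieIdeal Φ L), ∀ σ : G,
        (DirectSum.decompose 𝒜 y σ : L) ∈ (⁅I, I⁆ : LieIdeal Φ L)) ∧
    (∀ K : LieIdeal Φ L,
      (∀ y ∈ K, ∀ σ : G, (DirectSum.decompose 𝒜 y σ : L) ∈ K) →
      K ≠ ⊥ → (⁅I, I⁆ : LieIdeal Φ L) ⊓ K ≠ ⊥) := by
  constructor
  · -- ⁅I, I⁆ is a graded ideal
    intro y hy σ
    have hy' : y ∈ Submodule.span Φ {m : L | ∃ x ∈ I, ∃ n ∈ I, ⁅x, n⁆ = m} := by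
      rw [← LieSubmodule.lieIdeal_oper_eq_linear_span' (I := I) (N := I)]
      exact hy
    clear hy
    classical
    induction hy' using Submodule.span_induction with
    | mem m hm =>
      obtain ⟨x, hx, n, hn, rfl⟩ := hm
      -- expand x and n into homogeneous components
      have heq : ⁅x, n⁆ =
          ∑ τ ∈ (DirectSum.decompose 𝒜 x).support,
            ∑ τ' ∈ (DirectSum.decompose 𝒜 n).support,
              ⁅(DirectSum.decompose 𝒜 x τ : L), (DirectSum.decompose 𝒜 n τ' : L)⁆ := by
        conv_lhs => rw [← DirectSum.sum_support_decompose 𝒜 x,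
          ← DirectSum.sum_support_decompose 𝒜 n]
        rw [sum_lie']
        exact Finset.sum_congr rfl fun τ _ => lie_sum' _ _ _
      rw [heq, DirectSum.decompose_sum]
      rw [DFinsupp.finset_sum_apply]
      rw [AddSubmonoidClass.coe_finset_sum]
      apply Submodule.sum_mem
      intro τ _
      rw [DirectSum.decompose_sum, DFinsupp.finset_sum_apply, AddSubmonoidClass.coe_finset_sum]
      apply Submodule.sum_mem
      intro τ' _
      have hmem : ⁅(DirectSum.decompose 𝒜 x τ : L), (DirectSum.decompose 𝒜 n τ' : L)⁆ ∈
          𝒜 (τ * τ') :=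
        hbracket τ τ' _ _ (DirectSum.decompose 𝒜 x τ).2 (DirectSum.decompose 𝒜 n τ').2
      by_cases h : τ * τ' = σ
      · rw [← h, DirectSum.decompose_of_mem_same 𝒜 hmem]
        exact LieSubmodule.lie_mem_lie (hIgr x hx τ) (hIgr n hn τ')
      · rw [DirectSum.decompose_of_mem_ne 𝒜 hmem h]
        exact Submodule.zero_mem _
    | zero => simp
    | add a b _ _ ha hb =>
      rw [DirectSum.decompose_add, DirectSum.add_apply, AddSubmonoid.coe_add]
      exact add_mem ha hb
    | smul c a _ ha =>
      rw [DirectSum.decompose_smul]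
      rw [DFinsupp.smul_apply, SetLike.val_smul]
      exact (⁅I, I⁆ : LieIdeal Φ L).smul_mem c ha
  · -- ⁅I, I⁆ is essential
    intro K hKgr hK
    have hJgr : ∀ y ∈ I ⊓ K, ∀ σ : G, (DirectSum.decompose 𝒜 y σ : L) ∈ I ⊓ K := by
      intro y hy σ
      rw [LieSubmodule.mem_inf] at hy ⊢
      exact ⟨hIgr y hy.1 σ, hKgr y hy.2 σ⟩
    have hJ : I ⊓ K ≠ ⊥ := hIess K hKgr hK
    have h2 : ⁅I ⊓ K, I ⊓ K⁆ ≠ (⊥ : LieIdeal Φ L) := hsemiprime (I ⊓ K) hJgr hJ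
    intro hcon
    apply h2
    rw [eq_bot_iff] at hcon ⊢
    refine le_trans (le_inf ?_ ?_) hcon
    · exact LieSubmodule.mono_lie inf_le_left inf_le_left
    · exact le_trans (LieSubmodule.lie_le_right _ _) inf_le_right
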